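/- Fix integers n, s ≥ 2. Let g(x) = x^{ns} − x^{ns−1} + x^{n−1} − 1 and f(x) = (x^s − 1)^n − x^{n−1}(x^{s−1} − 1)^n. If α ∈ ℂ satisfies g(α) = 0, then f(α^n) = 0. -/
import Mathlib


/-- For `n, s ≥ 2`, if `α` is a root of `g(x) = x^{ns} − x^{ns−1} + x^{n−1} − 1`, then
`α^n` is a root of `f(x) = (x^s − 1)^n − x^{n−1}(x^{s−1} − 1)^n`. -/
theorem generalised_theta_root (n s : ℕ) (hn : 2 ≤ n) (hs : 2 ≤ s) (α : ℂ)
    (hg : α ^ (n * s) - α ^ (n * s - 1) + α ^ (n - 1) - 1 = 0) :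
    ((α ^ n) ^ s - 1) ^ n - (α ^ n) ^ (n - 1) * ((α ^ n) ^ (s - 1) - 1) ^ n = 0 := by
  have key : (α ^ n) ^ s - 1 = α ^ (n - 1) * ((α ^ n) ^ (s - 1) - 1) := by
    have e1 : (α ^ n) ^ s = α ^ (n * s - 1) - α ^ (n - 1) + 1 := by
      rw [← pow_mul]; linear_combination hg
    have e2 : α ^ (n - 1) * (α ^ n) ^ (s - 1) = α ^ (n * s - 1) := by
      rw [← pow_mul, ← pow_add]
      congr 1
      have h3 : n * s = n * (s - 1) + n := by
        cases' Nat.exists_eq_add_of_le hs with b hb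
        subst hb; simp; ring
      omega
    linear_combination e1 - e2
  rw [key, mul_pow, ← pow_mul, ← pow_mul, Nat.mul_comm (n-1) n]
  ring
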